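/- Let G and H be reflexive weakly connected digraphs and α, β : G → H homomorphisms such that α(C) = β(C) = ε in π(\bar H) for every closed walk C in G. Let q ∈ V(G) and let Q be a reduced walk from α(q) to β(q); for each v ∈ V(G) let S_v be the reduced walk α(W)⁻¹ · Q · β(W) for any walk W from q to v in G. Then Q is H-realizable for α, β, q (via an H-recoloring sequence satisfying the push-or-pull property) if and only if for every directed closed walk u₁ → u₂ → … → u_n → u₁ in G (n ≥ 2), each of the walks S_{u₁}, …, S_{u_n} is symmetric. -/

import Mathlib

namespace HRecoloring

/-- A digraph: a vertex type together with an arc relation. -/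
structure Dgraph (V : Type) where
  Adj : V → V → Prop

variable {V X : Type}

/-- Adjacency in the underlying undirected graph. -/
def Dgraph.UAdj (G : Dgraph V) (u v : V) : Prop := G.Adj u v ∨ G.Adj v u

/-- A digraph is loopless if it has no arc `v → v`. -/
def Dgraph.Loopless (G : Dgraph V) : Prop := ∀ v, ¬ G.Adj v v

/-- A digraph is reflexive if `v → v` for every vertex `v`. -/
def Dgraph.IsReflexive (G : Dgraph V) : Prop := ∀ v, G.Adj v v

/-- A symmetric digraph, which we identify with an undirected graph. -/
def Dgraph.IsSymmetric (G : Dgraph V) : Prop := ∀ u v, G.Adj u v → G.Adj v u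

/-- The underlying undirected graph, as a symmetric digraph. -/
def Dgraph.usym (G : Dgraph V) : Dgraph V := ⟨fun u v => G.UAdj u v⟩

/-- A (di)graph homomorphism. -/
def IsHom (G : Dgraph V) (H : Dgraph X) (f : V → X) : Prop :=
  ∀ ⦃u v⦄, G.Adj u v → H.Adj (f u) (f v)

/-- A walk from `a` to `b`, encoded by its list of successive vertices.
A walk in a digraph is a walk in its underlying undirected graph. -/
def IsWalk (G : Dgraph V) (a b : V) (l : List V) : Prop :=
  l ≠ [] ∧ l.head? = some a ∧ l.getLast? = some b ∧ l.Chain' G.UAdj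

/-- Weak connectivity. -/
def Dgraph.WConn (G : Dgraph V) : Prop := ∀ u v : V, ∃ l, IsWalk G u v l

/-- Concatenation of two walks sharing an endpoint. -/
def wcomp (l₁ l₂ : List V) : List V := l₁ ++ l₂.tail

/-- Number of edges of a walk. -/
def wlen (l : List V) : ℕ := l.length - 1

/-- One reduction step on walks: delete a backtracking pair `(x y)(y x)` or a
one-edge loop step `(x x)`. -/
def RStep (l l' : List V) : Prop :=
  (∃ (p s : List V) (x y : V), l = p ++ [x, y, x] ++ s ∧ l' = p ++ [x] ++ s) ∨
  (∃ (p s : List V) (x : V), l = p ++ [x, x] ++ s ∧ l' = p ++ [x] ++ s)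

/-- Equality of walks in the fundamental groupoid `π(H)`: the equivalence
generated by reduction steps (two walks are equal in `π(H)` iff they reduce to
the same reduced walk). -/
def PiEq (l l' : List V) : Prop := Relation.EqvGen RStep l l'

/-- A walk is reduced if no reduction step applies to it. -/
def IsReduced (l : List V) : Prop := ∀ l', ¬ RStep l l'

/-- A closed walk is cyclically reduced if it is reduced and its first and last
edges are not inverses of each other. -/
def IsCycReduced (l : List V) : Prop :=
  IsReduced l ∧ ∃ h : 2 ≤ l.length,
    l.get ⟨1, by omega⟩ ≠ l.get ⟨l.length - 2, by omega⟩

/-- `n`-fold concatenation of a closed walk `R` based at `h`. -/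
def witer (R : List V) (h : V) : ℕ → List V
  | 0 => [h]
  | n + 1 => wcomp R (witer R h n)

/-- `Rⁿ` for an integer `n`, for a closed walk `R` based at `h`; for `n < 0`
this is the `|n|`-fold concatenation of the reversed walk `R⁻¹`. -/
def zpowWalk (R : List V) (h : V) (n : ℤ) : List V :=
  if 0 ≤ n then witer R h n.toNat else witer R.reverse h (-n).toNat

/-- A walk is symmetric if every edge it traverses is a symmetric arc. -/
def IsSymWalk (H : Dgraph X) (l : List X) : Prop :=
  l.Chain' fun a b => H.Adj a b ∧ H.Adj b a

/-- The conjugated walk `α(W)⁻¹ · Q · β(W)`. -/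
def conj (α β : V → X) (Wl : List V) (Q : List X) : List X :=
  wcomp (wcomp (Wl.map α).reverse Q) (Wl.map β)

/-- Topological validity of a walk `Q` from `α q` to `β q`:
`β(C) = Q⁻¹ · α(C) · Q` in `π(H)` for every closed walk `C` at `q`. -/
def TopValid (G : Dgraph V) (H : Dgraph X) (α β : V → X) (q : V) (Q : List X) : Prop :=
  ∀ C : List V, IsWalk G q q C →
    PiEq (C.map β) (wcomp (wcomp Q.reverse (C.map α)) Q)

/-- IN-zigzag pattern `a₁ ← a₂ → a₃ ← … ← a_{n-1} → a_n`. -/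
def INCompatible (H : Dgraph X) (l : List X) : Prop :=
  ∀ (i : ℕ) (h : i + 1 < l.length),
    if i % 2 = 0 then H.Adj (l.get ⟨i + 1, h⟩) (l.get ⟨i, by omega⟩)
    else H.Adj (l.get ⟨i, by omega⟩) (l.get ⟨i + 1, h⟩)

/-- OUT-zigzag pattern `a₁ → a₂ ← a₃ → … → a_{n-1} ← a_n`. -/
def OUTCompatible (H : Dgraph X) (l : List X) : Prop :=
  ∀ (i : ℕ) (h : i + 1 < l.length),
    if i % 2 = 0 then H.Adj (l.get ⟨i, by omega⟩) (l.get ⟨i + 1, h⟩)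
    else H.Adj (l.get ⟨i + 1, h⟩) (l.get ⟨i, by omega⟩)

/-- A vertex is of type IN if it has an in-neighbor. -/
def TypeIN (G : Dgraph V) (v : V) : Prop := ∃ u, G.Adj u v

/-- A vertex is of type OUT if it has an out-neighbor. -/
def TypeOUT (G : Dgraph V) (v : V) : Prop := ∃ u, G.Adj v u

/-- A vertex is of type SYM if it is of type IN and of type OUT. -/
def TypeSYM (G : Dgraph V) (v : V) : Prop := TypeIN G v ∧ TypeOUT G v

/-- The zigzag condition for the vertex `v`. -/
def Zigzag (G : Dgraph V) (H : Dgraph X) (v : V) (l : List X) : Prop :=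
  (TypeIN G v → INCompatible H l) ∧ (TypeOUT G v → OUTCompatible H l)

/-- A recoloring sequence: a nonempty sequence of homomorphisms in which
consecutive homomorphisms differ on exactly one vertex. -/
def IsRecolSeq (G : Dgraph V) (H : Dgraph X) (σs : List (V → X)) : Prop :=
  σs ≠ [] ∧ (∀ σ ∈ σs, IsHom G H σ) ∧ σs.Chain' fun σ σ' => ∃! u, σ u ≠ σ' u

/-- The monochromatic neighborhood property: whenever a vertex changes its
color, all of its neighbors (in the underlying undirected graph) have one
common color. -/
def MonoNbhd (G : Dgraph V) (σs : List (V → X)) : Prop :=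
  σs.Chain' fun σ σ' => ∀ v, σ v ≠ σ' v → ∃ h, ∀ w, G.UAdj v w → σ w = h

/-- `VWalk G v σs S`: `S` is the vertex walk `S(v)` of the recoloring sequence
`σs`; each color change of `v` from `a` to `b`, while all neighbors of `v` are
colored `h`, contributes the two edges `(a h)(h b)`. -/
inductive VWalk (G : Dgraph V) (v : V) : List (V → X) → List X → Prop
  | single (σ : V → X) : VWalk G v [σ] [σ v]
  | stay {σ σ' : V → X} {rest : List (V → X)} {l : List X} :
      σ v = σ' v → VWalk G v (σ' :: rest) l → VWalk G v (σ :: σ' :: rest) l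
  | move {σ σ' : V → X} {rest : List (V → X)} {l : List X} (h : X) :
      σ v ≠ σ' v → (∀ w, G.UAdj v w → σ w = h) →
      VWalk G v (σ' :: rest) l → VWalk G v (σ :: σ' :: rest) (σ v :: h :: l)

/-- `H`-realizability of a walk `Q` via recoloring sequences satisfying the
monochromatic neighborhood property: `Q = S(q)` in `π(H)`. -/
def MRealizable (G : Dgraph V) (H : Dgraph X) (α β : V → X) (q : V) (Q : List X) : Prop :=
  ∃ (σs : List (V → X)) (Sq : List X),
    IsRecolSeq G H σs ∧ σs.head? = some α ∧ σs.getLast? = some β ∧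
    MonoNbhd G σs ∧ VWalk G q σs Sq ∧ PiEq Sq Q

/-- Orientation compatibility of a walk `Q`: every generated vertex walk
satisfies the zigzag condition. -/
def OrientCompatible (G : Dgraph V) (H : Dgraph X) (α β : V → X) (q : V) (Q : List X) : Prop :=
  ∀ (v : V) (Wl : List V), IsWalk G q v Wl →
    ∀ S : List X, IsReduced S → PiEq (conj α β Wl Q) S → Zigzag G H v S

/-- Hom₁-adjacency: the homomorphisms differ on exactly one vertex and, for
every arc `x → y` of `G`, both `φ x → ψ y` and `ψ x → φ y` are arcs of `H`. -/
def Hom1Adj (G : Dgraph V) (H : Dgraph X) (φ ψ : V → X) : Prop :=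
  (∃! u, φ u ≠ ψ u) ∧ ∀ ⦃x y⦄, G.Adj x y → H.Adj (φ x) (ψ y) ∧ H.Adj (ψ x) (φ y)

/-- A recoloring sequence in the Hom₁ sense (digraphs). -/
def Hom1Seq (G : Dgraph V) (H : Dgraph X) (σs : List (V → X)) : Prop :=
  σs ≠ [] ∧ (∀ σ ∈ σs, IsHom G H σ) ∧ σs.Chain' (Hom1Adj G H)

/-- A recoloring sequence in which each step recolors exactly one vertex to an
adjacent color (the Hom₁ sense for reflexive undirected graphs). -/
def AdjRecolSeq (G : Dgraph V) (H : Dgraph X) (σs : List (V → X)) : Prop :=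
  σs ≠ [] ∧ (∀ σ ∈ σs, IsHom G H σ) ∧
  σs.Chain' fun σ σ' => (∃! u, σ u ≠ σ' u) ∧ ∀ u, σ u ≠ σ' u → H.Adj (σ u) (σ' u)

/-- The push-or-pull property: whenever a vertex changes its color from `a` to
`b`, every neighbor of that vertex has color `a` or `b`. -/
def PushOrPull (G : Dgraph V) (σs : List (V → X)) : Prop :=
  σs.Chain' fun σ σ' => ∀ u, σ u ≠ σ' u → ∀ w, G.UAdj u w → σ w = σ u ∨ σ w = σ' u

/-- The walk of successive colors of `v` along a recoloring sequence. -/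
def colorWalk (σs : List (V → X)) (v : V) : List X := σs.map fun σ => σ v

/-- `H`-realizability via recoloring sequences (reflexive undirected Hom₁
sense) satisfying the push-or-pull property. -/
def PRealizable (G : Dgraph V) (H : Dgraph X) (α β : V → X) (q : V) (Q : List X) : Prop :=
  ∃ σs : List (V → X), AdjRecolSeq G H σs ∧ σs.head? = some α ∧ σs.getLast? = some β ∧
    PushOrPull G σs ∧ PiEq (colorWalk σs q) Q

/-- `H`-realizability via Hom₁ recoloring sequences of digraphs satisfying the
push-or-pull property. -/
def DRealizable (G : Dgraph V) (H : Dgraph X) (α β : V → X) (q : V) (Q : List X) : Prop :=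
  ∃ σs : List (V → X), Hom1Seq G H σs ∧ σs.head? = some α ∧ σs.getLast? = some β ∧
    PushOrPull G σs ∧ PiEq (colorWalk σs q) Q

/-- `H` contains no 4-cycle of algebraic girth 0 as a subgraph (neither of the
two orientations of the 4-cycle with two forward and two backward arcs). -/
def NoZeroGirthC4 (H : Dgraph X) : Prop :=
  ∀ a b c d : X, a ≠ b → a ≠ c → a ≠ d → b ≠ c → b ≠ d → c ≠ d →
    ¬(H.Adj a b ∧ H.Adj b d ∧ H.Adj a c ∧ H.Adj c d) ∧
    ¬(H.Adj a b ∧ H.Adj d b ∧ H.Adj a c ∧ H.Adj d c)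

/-- `H` contains no triangle of algebraic girth 1 as a subgraph. -/
def NoOneGirthTriangle (H : Dgraph X) : Prop :=
  ∀ x y z : X, x ≠ y → y ≠ z → x ≠ z → ¬(H.Adj x y ∧ H.Adj y z ∧ H.Adj x z)

/-- A path in the reconfiguration graph `R_H(G)` from `α` to `β`. -/
def IsRPath (G : Dgraph V) (H : Dgraph X) (α β : V → X) (L : List (V → X)) : Prop :=
  L ≠ [] ∧ L.head? = some α ∧ L.getLast? = some β ∧
  (∀ σ ∈ L, IsHom G H σ) ∧ L.Chain' fun φ ψ => ∃! u, φ u ≠ ψ u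

/-- A path in the graph `Hom₁(G, H)` from `α` to `β`. -/
def IsHom1Path (G : Dgraph V) (H : Dgraph X) (α β : V → X) (L : List (V → X)) : Prop :=
  L ≠ [] ∧ L.head? = some α ∧ L.getLast? = some β ∧
  (∀ σ ∈ L, IsHom G H σ) ∧ L.Chain' (Hom1Adj G H)

/-- The set of reduced walks `Q` from `α q` to `β q` that generate symmetric
vertex walks on `V'` with the system of walks `Wf`. -/
def SymGenSet (H : Dgraph X) (α β : V → X) (q : V)
    (V' : Set V) (Wf : V → List V) : Set (List X) :=
  {Q | IsWalk H (α q) (β q) Q ∧ IsReduced Q ∧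
    ∀ v ∈ V', ∀ S : List X, IsReduced S → PiEq (conj α β (Wf v) Q) S → IsSymWalk H S}

/-- The set of orientation-compatible walks for `q` and the system `Uf`. -/
def OCSet (G : Dgraph V) (H : Dgraph X) (α β : V → X) (q : V)
    (Uf : V → List V) : Set (List X) :=
  {Q | IsWalk H (α q) (β q) Q ∧ IsReduced Q ∧ Even (wlen Q) ∧
    ∀ (v : V) (S : List X), IsReduced S → PiEq (conj α β (Uf v) Q) S → Zigzag G H v S}

/-- The set `Π_q` of walks from `α q` to `β q` that are `H`-realizable via
recoloring sequences satisfying the monochromatic neighborhood property. -/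
def MRealSet (G : Dgraph V) (H : Dgraph X) (α β : V → X) (q : V) : Set (List X) :=
  {Q | IsWalk H (α q) (β q) Q ∧ IsReduced Q ∧ MRealizable G H α β q Q}

/-- The set of walks from `α q` to `β q` that are `H`-realizable via
recoloring sequences satisfying the push-or-pull property. -/
def PRealSet (G : Dgraph V) (H : Dgraph X) (α β : V → X) (q : V) : Set (List X) :=
  {Q | IsWalk H (α q) (β q) Q ∧ IsReduced Q ∧ PRealizable G H α β q Q}

/-- Ceiling division on natural numbers. -/
def cdiv (a b : ℕ) : ℕ := (a + b - 1) / b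

end HRecoloring
section Aux
open HRecoloring List

variable {V X : Type}

/-! ### Basic PiEq lemmas -/

theorem piEq_refl (l : List V) : PiEq l l := Relation.EqvGen.refl l

theorem piEq_symm {l l' : List V} (h : PiEq l l') : PiEq l' l := Relation.EqvGen.symm _ _ h

theorem piEq_trans {l₁ l₂ l₃ : List V} (h : PiEq l₁ l₂) (h' : PiEq l₂ l₃) : PiEq l₁ l₃ :=
  Relation.EqvGen.trans _ _ _ h h'

theorem piEq_of_rstep {l l' : List V} (h : RStep l l') : PiEq l l' := Relation.EqvGen.rel _ _ h

theorem rstep_append_left {l l' : List V} (p : List V) (h : RStep l l') :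
    RStep (p ++ l) (p ++ l') := by
  rcases h with ⟨u, s, x, y, h1, h2⟩ | ⟨u, s, x, h1, h2⟩
  · exact Or.inl ⟨p ++ u, s, x, y, by simp [h1], by simp [h2]⟩
  · exact Or.inr ⟨p ++ u, s, x, by simp [h1], by simp [h2]⟩

theorem rstep_append_right {l l' : List V} (s₀ : List V) (h : RStep l l') :
    RStep (l ++ s₀) (l' ++ s₀) := by
  rcases h with ⟨u, s, x, y, h1, h2⟩ | ⟨u, s, x, h1, h2⟩
  · exact Or.inl ⟨u, s ++ s₀, x, y, by simp [h1], by simp [h2]⟩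
  · exact Or.inr ⟨u, s ++ s₀, x, by simp [h1], by simp [h2]⟩

theorem rstep_reverse {l l' : List V} (h : RStep l l') :
    RStep l.reverse l'.reverse := by
  rcases h with ⟨u, s, x, y, h1, h2⟩ | ⟨u, s, x, h1, h2⟩
  · refine Or.inl ⟨s.reverse, u.reverse, x, y, by simp [h1], by simp [h2]⟩
  · refine Or.inr ⟨s.reverse, u.reverse, x, by simp [h1], by simp [h2]⟩

theorem piEq_lift {f : List V → List V}
    (hf : ∀ a b, RStep a b → RStep (f a) (f b)) {l l' : List V} (h : PiEq l l') :
    PiEq (f l) (f l') := by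
  induction h with
  | rel a b hab => exact Relation.EqvGen.rel _ _ (hf _ _ hab)
  | refl a => exact Relation.EqvGen.refl _
  | symm a b _ ih => exact Relation.EqvGen.symm _ _ ih
  | trans a b c _ _ ih1 ih2 => exact Relation.EqvGen.trans _ _ _ ih1 ih2

theorem piEq_append_left {l l' : List V} (p : List V) (h : PiEq l l') :
    PiEq (p ++ l) (p ++ l') := piEq_lift (fun _ _ => rstep_append_left p) h

theorem piEq_append_right {l l' : List V} (s : List V) (h : PiEq l l') :
    PiEq (l ++ s) (l' ++ s) := piEq_lift (fun _ _ => rstep_append_right s) h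

theorem piEq_cons {l l' : List V} (a : V) (h : PiEq l l') :
    PiEq (a :: l) (a :: l') := piEq_append_left [a] h

theorem piEq_reverse {l l' : List V} (h : PiEq l l') :
    PiEq l.reverse l'.reverse := piEq_lift (fun _ _ => rstep_reverse) h

theorem rstep_head?_eq {l l' : List V} (h : RStep l l') : l.head? = l'.head? := by
  rcases h with ⟨p, s, x, y, h1, h2⟩ | ⟨p, s, x, h1, h2⟩ <;> subst h1 <;> subst h2 <;>
    cases p <;> simp

theorem piEq_head?_eq {l l' : List V} (h : PiEq l l') : l.head? = l'.head? := by
  induction h with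
  | rel a b hab => exact rstep_head?_eq hab
  | refl a => rfl
  | symm a b _ ih => exact ih.symm
  | trans a b c _ _ ih1 ih2 => exact ih1.trans ih2

theorem rstep_getLast?_eq {l l' : List V} (h : RStep l l') : l.getLast? = l'.getLast? := by
  rw [← List.head?_reverse, ← List.head?_reverse]
  exact rstep_head?_eq (rstep_reverse h)

theorem piEq_getLast?_eq {l l' : List V} (h : PiEq l l') : l.getLast? = l'.getLast? := by
  induction h with
  | rel a b hab => exact rstep_getLast?_eq hab
  | refl a => rfl
  | symm a b _ ih => exact ih.symm
  | trans a b c _ _ ih1 ih2 => exact ih1.trans ih2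

/-- convenient RStep constructors -/
theorem rstep_bt (p s : List V) (x y : V) : RStep (p ++ [x, y, x] ++ s) (p ++ [x] ++ s) :=
  Or.inl ⟨p, s, x, y, rfl, rfl⟩

theorem rstep_loop (p s : List V) (x : V) : RStep (p ++ [x, x] ++ s) (p ++ [x] ++ s) :=
  Or.inr ⟨p, s, x, rfl, rfl⟩

theorem piEq_bt (a b : V) : PiEq [a, b, a] [a] := by
  have := piEq_of_rstep (rstep_bt [] [] a b)
  simpa using this

theorem piEq_bt_head (a b : V) (l : List V) : PiEq (a :: b :: a :: l) (a :: l) := by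
  have := piEq_of_rstep (rstep_bt [] l a b)
  simpa using this

theorem piEq_loop_head' (a : V) (l : List V) : PiEq (a :: a :: l) (a :: l) := by
  have := piEq_of_rstep (rstep_loop [] l a)
  simpa using this

theorem piEq_loop_head {l : List V} {a : V} (h : l.head? = some a) :
    PiEq (a :: l) l := by
  cases l with
  | nil => simp at h
  | cons b t =>
    simp only [List.head?_cons, Option.some.injEq] at h
    subst h
    exact piEq_loop_head' b t

theorem piEq_snoc_last {l : List V} {a : V} (h : l.getLast? = some a) :
    PiEq (l ++ [a]) l := by
  have h1 : l.dropLast ++ [a] = l := List.dropLast_append_getLast? _ h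
  have h2 : l ++ [a] = l.dropLast ++ [a, a] ++ [] := by
    conv_lhs => rw [← h1]
    simp
  rw [h2]
  conv_rhs => rw [← h1]
  have := piEq_of_rstep (rstep_loop l.dropLast [] a)
  simpa using this

end Aux
section Aux2
open HRecoloring List

variable {V X : Type}

/-! ### iota: embedding walks into the free group on ordered pairs -/

noncomputable def wgen (a b : X) : FreeGroup (X × X) :=
  FreeGroup.of (a, b) * (FreeGroup.of (b, a))⁻¹

noncomputable def iota : List X → FreeGroup (X × X)
  | [] => 1
  | [_] => 1
  | a :: b :: t => wgen a b * iota (b :: t)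

@[simp] theorem iota_nil : iota ([] : List X) = 1 := rfl
@[simp] theorem iota_single (a : X) : iota [a] = 1 := rfl
theorem iota_cons₂ (a b : X) (t : List X) : iota (a :: b :: t) = wgen a b * iota (b :: t) := rfl

theorem wgen_self (a : X) : wgen a a = 1 := by simp [wgen]

theorem wgen_mul_wgen (a b : X) : wgen a b * wgen b a = 1 := by
  simp [wgen, mul_assoc]

theorem iota_append_mid (x : X) (s : List X) :
    ∀ p : List X, iota (p ++ x :: s) = iota (p ++ [x]) * iota (x :: s) := by
  intro p
  induction p with
  | nil => simp
  | cons a p ih =>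
    cases p with
    | nil => simp [iota_cons₂]
    | cons b p' =>
      simp only [List.cons_append] at ih ⊢
      rw [iota_cons₂, ih, iota_cons₂]
      simp [mul_assoc]

theorem iota_rstep {l l' : List X} (h : RStep l l') : iota l = iota l' := by
  rcases h with ⟨p, s, x, y, h1, h2⟩ | ⟨p, s, x, h1, h2⟩
  · subst h1; subst h2
    have e1 : p ++ [x, y, x] ++ s = p ++ x :: (y :: x :: s) := by simp
    have e2 : p ++ [x] ++ s = p ++ x :: s := by simp
    rw [e1, e2, iota_append_mid x (y :: x :: s) p, iota_append_mid x s p,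
      iota_cons₂ x y, iota_cons₂ y x, ← mul_assoc (wgen x y) (wgen y x), wgen_mul_wgen,
      one_mul]
  · subst h1; subst h2
    have e1 : p ++ [x, x] ++ s = p ++ x :: (x :: s) := by simp
    have e2 : p ++ [x] ++ s = p ++ x :: s := by simp
    rw [e1, e2, iota_append_mid x (x :: s) p, iota_append_mid x s p, iota_cons₂ x x,
      wgen_self, one_mul]

theorem piEq_iota {l l' : List X} (h : PiEq l l') : iota l = iota l' := by
  induction h with
  | rel a b hab => exact iota_rstep hab
  | refl a => rfl
  | symm a b _ ih => exact ih.symm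
  | trans a b c _ _ ih1 ih2 => exact ih1.trans ih2

theorem iota_cons_head {l : List X} {x : X} (a : X) (h : l.head? = some x) :
    iota (a :: l) = wgen a x * iota l := by
  cases l with
  | nil => simp at h
  | cons b t =>
    simp only [List.head?_cons, Option.some.injEq] at h
    subst h
    rfl

/-! ### letters and reduced words -/

def letters : List X → List ((X × X) × Bool)
  | [] => []
  | [_] => []
  | a :: b :: t => ((a, b), true) :: ((b, a), false) :: letters (b :: t)

theorem wgen_eq_mk (a b : X) :
    wgen a b = FreeGroup.mk [((a, b), true), ((b, a), false)] := by
  rw [wgen]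
  have h1 : FreeGroup.of (a, b) = FreeGroup.mk [((a, b), true)] := rfl
  have h2 : (FreeGroup.of (b, a))⁻¹ = FreeGroup.mk [((b, a), false)] := by
    rw [show FreeGroup.of (b, a) = FreeGroup.mk [((b, a), true)] from rfl, FreeGroup.inv_mk]
    rfl
  rw [h1, h2, FreeGroup.mul_mk]
  rfl

theorem iota_eq_mk : ∀ l : List X, iota l = FreeGroup.mk (letters l)
  | [] => rfl
  | [_] => rfl
  | a :: b :: t => by
    rw [iota_cons₂, iota_eq_mk (b :: t), wgen_eq_mk, FreeGroup.mul_mk]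
    rfl

/-- if no adjacent cancelling pair, reduce is the identity -/
theorem reduce_eq_self_of_chain' [DecidableEq Y] :
    ∀ L : List (Y × Bool), L.Chain' (fun a b => ¬(a.1 = b.1 ∧ a.2 = !b.2)) →
      FreeGroup.reduce L = L := by
  intro L
  induction L with
  | nil => intro _; rfl
  | cons x L ih =>
    intro hc
    have hL : L.Chain' _ := (List.isChain_cons.1 hc).2
    rw [FreeGroup.reduce.cons, ih hL]
    cases L with
    | nil => rfl
    | cons y t =>
      have hxy := (List.isChain_cons_cons.1 hc).1
      simp only [if_neg hxy]

/-! ### structural lemmas about IsReduced -/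

theorem isReduced_nil : IsReduced ([] : List X) := by
  rintro l' (⟨p, s, x, y, h1, _⟩ | ⟨p, s, x, h1, _⟩) <;>
    · apply_fun List.length at h1; simp at h1

theorem isReduced_singleton (a : X) : IsReduced [a] := by
  rintro l' (⟨p, s, x, y, h1, _⟩ | ⟨p, s, x, h1, _⟩) <;>
    · apply_fun List.length at h1; simp at h1; omega

theorem isReduced_cons {l : List X} {a : X} (h : IsReduced l)
    (h1 : ∀ b, l.head? = some b → a ≠ b)
    (h2 : ∀ c, l.tail.head? = some c → a ≠ c) : IsReduced (a :: l) := by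
  rintro l' (⟨p, s, x, y, e1, _⟩ | ⟨p, s, x, e1, _⟩)
  · cases p with
    | nil =>
      simp only [List.nil_append, List.cons_append] at e1
      obtain ⟨rfl, rfl⟩ : a = x ∧ l = y :: x :: s := by
        constructor
        · exact (List.cons.injEq _ _ _ _ ▸ e1).1
        · exact (List.cons.injEq _ _ _ _ ▸ e1).2
      exact h2 a rfl rfl
    | cons d p' =>
      simp only [List.cons_append] at e1
      have hl : l = p' ++ [x, y, x] ++ s := by
        have := (List.cons.injEq _ _ _ _ ▸ e1).2
        simpa using this
      exact h (p' ++ [x] ++ s) (Or.inl ⟨p', s, x, y, hl, rfl⟩)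
  · cases p with
    | nil =>
      simp only [List.nil_append, List.cons_append] at e1
      obtain ⟨rfl, rfl⟩ : a = x ∧ l = x :: s := by
        constructor
        · exact (List.cons.injEq _ _ _ _ ▸ e1).1
        · exact (List.cons.injEq _ _ _ _ ▸ e1).2
      exact h1 a rfl rfl
    | cons d p' =>
      simp only [List.cons_append] at e1
      have hl : l = p' ++ [x, x] ++ s := by
        have := (List.cons.injEq _ _ _ _ ▸ e1).2
        simpa using this
      exact h (p' ++ [x] ++ s) (Or.inr ⟨p', s, x, hl, rfl⟩)

theorem isReduced_tail {l : List X} {a : X} (h : IsReduced (a :: l)) : IsReduced l :=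
  fun l' hs => h (a :: l') (rstep_append_left [a] hs)

theorem isReduced_reverse {l : List X} (h : IsReduced l) : IsReduced l.reverse := by
  intro l' hs
  have := rstep_reverse hs
  rw [List.reverse_reverse] at this
  exact h l'.reverse this

theorem isReduced_prefix {l s : List X} (h : IsReduced (l ++ s)) : IsReduced l :=
  fun l' hs => h (l' ++ s) (rstep_append_right s hs)

theorem isReduced_dropLast {l : List X} (h : IsReduced l) : IsReduced l.dropLast := by
  cases hne : l.getLast? with
  | none => rw [List.getLast?_eq_none_iff] at hne; subst hne; exact isReduced_nil
  | some a =>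
    have := List.dropLast_append_getLast? _ hne
    rw [← this] at h
    exact isReduced_prefix h

theorem reverse_tail_eq_dropLast_reverse (l : List X) :
    l.reverse.tail = l.dropLast.reverse := by
  cases hne : l.getLast? with
  | none => rw [List.getLast?_eq_none_iff] at hne; subst hne; rfl
  | some a =>
    conv_lhs => rw [← List.dropLast_append_getLast? _ hne]
    simp

theorem isReduced_snoc {l : List X} {b : X} (h : IsReduced l)
    (h1 : ∀ c, l.getLast? = some c → b ≠ c)
    (h2 : ∀ c, l.dropLast.getLast? = some c → b ≠ c) : IsReduced (l ++ [b]) := by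
  have : (l ++ [b]).reverse = b :: l.reverse := by simp
  have hrev : IsReduced (b :: l.reverse) := by
    apply isReduced_cons (isReduced_reverse h)
    · intro c hc; exact h1 c (by rwa [List.head?_reverse] at hc)
    · intro c hc
      rw [reverse_tail_eq_dropLast_reverse, List.head?_reverse] at hc
      exact h2 c hc
  rw [show l ++ [b] = (b :: l.reverse).reverse by simp]
  exact isReduced_reverse hrev

/-! ### reduced letters and injectivity -/

theorem isReduced_pair_ne {l : List X} (h : IsReduced l) {a b : X} {t : List X}
    (he : l = a :: b :: t) : a ≠ b := by
  rintro rfl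
  subst he
  exact h (a :: t) (Or.inr ⟨[], t, a, rfl, rfl⟩)

theorem isReduced_triple_ne {l : List X} (h : IsReduced l) {a b c : X} {t : List X}
    (he : l = a :: b :: c :: t) : a ≠ c := by
  rintro rfl
  subst he
  exact h (a :: t) (Or.inl ⟨[], t, a, b, rfl, rfl⟩)

theorem letters_chain' : ∀ {l : List X}, IsReduced l →
    (letters l).Chain' (fun a b : (X × X) × Bool => ¬(a.1 = b.1 ∧ a.2 = !b.2))
  | [], _ => List.isChain_nil
  | [_], _ => List.isChain_nil
  | a :: b :: t, h => by
    have hab : a ≠ b := isReduced_pair_ne h rfl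
    have htail := letters_chain' (isReduced_tail h)
    cases t with
    | nil =>
      simp only [letters]
      rw [List.Chain', List.isChain_cons_cons]
      refine ⟨?_, List.isChain_singleton _⟩
      rintro ⟨h1, -⟩
      exact hab (congrArg Prod.fst h1)
    | cons c t' =>
      have hac : a ≠ c := isReduced_triple_ne h rfl
      simp only [letters] at htail ⊢
      rw [List.Chain', List.isChain_cons_cons, List.isChain_cons_cons]
      refine ⟨?_, ?_, htail⟩
      · rintro ⟨h1, -⟩
        exact hab (congrArg Prod.fst h1)
      · rintro ⟨h1, -⟩
        exact hac (congrArg Prod.snd h1)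

theorem letters_eq_imp : ∀ {l l' : List X}, letters l = letters l' →
    l.head? = l'.head? → l = l'
  | [], [], _, _ => rfl
  | [], [_], _, hh => by simp at hh
  | [_], [], _, hh => by simp at hh
  | [a], [a'], _, hh => by simpa using hh
  | [], _ :: _ :: _, hl, _ => by simp [letters] at hl
  | _ :: _ :: _, [], hl, _ => by simp [letters] at hl
  | [_], _ :: _ :: _, hl, _ => by simp [letters] at hl
  | _ :: _ :: _, [_], hl, _ => by simp [letters] at hl
  | a :: b :: t, a' :: b' :: t', hl, hh => by
    simp only [letters, List.cons.injEq, Prod.mk.injEq] at hl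
    obtain ⟨⟨⟨rfl, rfl⟩, -⟩, -, hrest⟩ := hl
    have := letters_eq_imp hrest (by rfl)
    rw [List.cons.injEq] at this
    simp [this.2]

theorem iota_one_of_short : ∀ {l : List X}, l.length ≤ 1 → letters l = []
  | [], _ => rfl
  | [_], _ => rfl
  | _ :: _ :: _, h => by simp at h

theorem short_of_letters_nil : ∀ {l : List X}, letters l = [] → l.length ≤ 1
  | [], _ => by simp
  | [_], _ => by simp
  | _ :: _ :: _, h => by simp [letters] at h

/-- Uniqueness of reduced forms -/
theorem piEq_reduced_unique {l l' : List X} (h : PiEq l l')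
    (hl : IsReduced l) (hl' : IsReduced l') : l = l' := by
  classical
  have hio : iota l = iota l' := piEq_iota h
  rw [iota_eq_mk, iota_eq_mk] at hio
  have hw := congrArg FreeGroup.toWord hio
  rw [FreeGroup.toWord_mk, FreeGroup.toWord_mk,
    reduce_eq_self_of_chain' _ (letters_chain' hl),
    reduce_eq_self_of_chain' _ (letters_chain' hl')] at hw
  exact letters_eq_imp hw (piEq_head?_eq h)

/-- a reduced walk with trivial iota is a single vertex -/
theorem reduced_iota_one {l : List X} (hl : IsReduced l) (h : iota l = 1) :
    l.length ≤ 1 := by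
  classical
  rw [iota_eq_mk] at h
  have hw := congrArg FreeGroup.toWord h
  rw [FreeGroup.toWord_mk, FreeGroup.toWord_one,
    reduce_eq_self_of_chain' _ (letters_chain' hl)] at hw
  exact short_of_letters_nil hw

/-! ### existence of reduced forms -/

theorem rstep_length_lt {l l' : List X} (h : RStep l l') : l'.length < l.length := by
  rcases h with ⟨p, s, x, y, h1, h2⟩ | ⟨p, s, x, h1, h2⟩ <;> subst h1 <;> subst h2 <;>
    simp <;> omega

theorem rstep_chain' {R : X → X → Prop} {l l' : List X} (h : RStep l l')
    (hc : l.Chain' R) : l'.Chain' R := by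
  rcases h with ⟨p, s, x, y, h1, h2⟩ | ⟨p, s, x, h1, h2⟩ <;> subst h1 <;> subst h2 <;>
    rw [List.append_assoc] at hc <;> rw [List.append_assoc] <;>
    rw [List.Chain', List.isChain_append] at hc ⊢ <;>
    obtain ⟨hp, hmid, hjun⟩ := hc
  · rw [List.isChain_append] at hmid ⊢
    obtain ⟨h3, hs, hjun2⟩ := hmid
    refine ⟨hp, ⟨List.isChain_singleton x, hs, ?_⟩, ?_⟩
    · intro a ha c hc
      simp at ha; subst ha
      exact hjun2 x (by simp) c hc
    · intro a ha c hc
      simp at hc; subst hc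
      exact hjun a ha x (by simp)
  · rw [List.isChain_append] at hmid ⊢
    obtain ⟨h3, hs, hjun2⟩ := hmid
    refine ⟨hp, ⟨List.isChain_singleton x, hs, ?_⟩, ?_⟩
    · intro a ha c hc
      simp at ha; subst ha
      exact hjun2 x (by simp) c hc
    · intro a ha c hc
      simp at hc; subst hc
      exact hjun a ha x (by simp)

theorem exists_reduced_aux : ∀ (n : ℕ) (l : List X), l.length ≤ n →
    ∃ r, PiEq l r ∧ IsReduced r ∧ ∀ R : X → X → Prop, l.Chain' R → r.Chain' R := by
  intro n
  induction n with
  | zero =>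
    intro l hl
    have : l = [] := List.eq_nil_of_length_eq_zero (Nat.le_zero.1 hl)
    subst this
    exact ⟨[], piEq_refl [], isReduced_nil, fun _ hc => hc⟩
  | succ n ih =>
    intro l hl
    by_cases h : HRecoloring.IsReduced l
    · exact ⟨l, piEq_refl l, h, fun _ hc => hc⟩
    · simp only [HRecoloring.IsReduced, not_forall, not_not] at h
      obtain ⟨l', hl'⟩ := h
      have hlt := rstep_length_lt hl'
      obtain ⟨r, h1, h2, h3⟩ := ih l' (by omega)
      exact ⟨r, piEq_trans (piEq_of_rstep hl') h1, h2,
        fun R hc => h3 R (rstep_chain' hl' hc)⟩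

theorem exists_reduced (l : List X) :
    ∃ r, PiEq l r ∧ IsReduced r ∧ ∀ R : X → X → Prop, l.Chain' R → r.Chain' R :=
  exists_reduced_aux l.length l le_rfl

end Aux2
section Aux3
open HRecoloring List

variable {V X : Type}

/-- the data of one valid recoloring step, sufficient for homotopy transport -/
def StepOK (G : Dgraph V) (σ σ' : V → X) : Prop :=
  (∃! u, σ u ≠ σ' u) ∧
    ∀ u, σ u ≠ σ' u → ∀ w, G.UAdj u w → σ w = σ u ∨ σ w = σ' u

theorem uadj_symm {G : Dgraph V} {u w : V} (h : G.UAdj u w) : G.UAdj w u := h.symm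

/-- the square lemma -/
theorem square_piEq {G : Dgraph V} {σ σ' : V → X} (hs : StepOK G σ σ')
    {v w : V} (hvw : G.UAdj v w) :
    PiEq [σ w, σ v, σ' v] [σ w, σ' w, σ' v] := by
  obtain ⟨⟨u, hu, huniq⟩, hpp⟩ := hs
  by_cases hveq : v = w
  · subst hveq
    refine piEq_trans (piEq_loop_head' (σ v) [σ' v]) (piEq_symm ?_)
    exact piEq_of_rstep (rstep_loop [σ v] [] (σ' v))
  by_cases hv : σ v = σ' v
  · by_cases hw : σ w = σ' w
    · rw [← hv, ← hw]
      refine piEq_trans (piEq_of_rstep (rstep_loop [σ w] [] (σ v))) (piEq_symm ?_)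
      exact piEq_loop_head' (σ w) [σ v]
    · -- changed vertex is w
      have hpv : σ v = σ w ∨ σ v = σ' w := hpp w hw v (uadj_symm hvw)
      rw [← hv]
      rcases hpv with hpv | hpv
      · rw [← hpv]
        refine piEq_trans ?_ (piEq_symm (piEq_bt (σ v) (σ' w)))
        exact piEq_trans (piEq_loop_head' (σ v) [σ v]) (piEq_loop_head' (σ v) [])
      · rw [← hpv]
        exact piEq_refl _
  · -- changed vertex is v
    have huv : v = u := huniq v hv
    have hww : σ w = σ' w := by
      by_contra hw
      exact hveq (huv.trans (huniq w hw).symm)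
    have hpw : σ w = σ v ∨ σ w = σ' v := hpp v hv w hvw
    rw [← hww]
    rcases hpw with hpw | hpw
    · rw [hpw]
      exact piEq_refl _
    · rw [hpw]
      refine piEq_trans (piEq_bt (σ' v) (σ v)) (piEq_symm ?_)
      exact piEq_trans (piEq_loop_head' (σ' v) [σ' v]) (piEq_loop_head' (σ' v) [])

theorem colorWalk_cons (σ : V → X) (σs : List (V → X)) (v : V) :
    colorWalk (σ :: σs) v = σ v :: colorWalk σs v := rfl

theorem colorWalk_head? {σs : List (V → X)} {α' : V → X} (h : σs.head? = some α') (v : V) :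
    (colorWalk σs v).head? = some (α' v) := by
  cases σs with
  | nil => simp at h
  | cons σ t =>
    simp only [List.head?_cons, Option.some.injEq] at h
    subst h
    rfl

/-- Lemma A: transport along an edge of `G` -/
theorem transport_edge {G : Dgraph V} :
    ∀ {σs : List (V → X)}, σs ≠ [] → σs.Chain' (StepOK G) →
    ∀ {α' β' : V → X}, σs.head? = some α' → σs.getLast? = some β' →
    ∀ {v w : V}, G.UAdj v w →
    PiEq (α' w :: (colorWalk σs v ++ [β' w])) (colorWalk σs w)
  | [], h, _, _, _, _, _, _, _ => absurd rfl h
  | [σ], _, _, α', β', hh, hl, v, w => by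
    simp only [List.head?_cons, Option.some.injEq] at hh
    simp only [List.getLast?_singleton, Option.some.injEq] at hl
    subst hh; subst hl
    intro _
    exact piEq_bt (σ w) (σ v)
  | σ :: σ' :: rest, _, hch, α', β', hh, hl, v, w => fun hvw => by
    simp only [List.head?_cons, Option.some.injEq] at hh
    subst hh
    have hch1 : StepOK G σ σ' := (List.isChain_cons_cons.1 hch).1
    have hch2 : (σ' :: rest).Chain' (StepOK G) := (List.isChain_cons_cons.1 hch).2
    have hl2 : (σ' :: rest).getLast? = some β' := by
      rwa [List.getLast?_cons_cons] at hl
    have ih := transport_edge (List.cons_ne_nil σ' rest) hch2 rfl hl2 hvw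
    -- goal : PiEq (σ w :: ((σ v :: colorWalk (σ'::rest) v) ++ [β' w]))
    --             (σ w :: colorWalk (σ'::rest) w)
    show PiEq (σ w :: ((σ v :: colorWalk (σ' :: rest) v) ++ [β' w]))
      (σ w :: colorWalk (σ' :: rest) w)
    have e1 : σ w :: ((σ v :: colorWalk (σ' :: rest) v) ++ [β' w]) =
        [σ w, σ v, σ' v] ++ (colorWalk rest v ++ [β' w]) := by
      simp [colorWalk_cons]
    have e2 : [σ w, σ' w, σ' v] ++ (colorWalk rest v ++ [β' w]) =
        σ w :: (σ' w :: (colorWalk (σ' :: rest) v ++ [β' w])) := by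
      simp [colorWalk_cons]
    rw [e1]
    refine piEq_trans (piEq_append_right _ (square_piEq hch1 hvw)) ?_
    rw [e2]
    exact piEq_cons (σ w) ih

theorem conj_singleton {α β : V → X} {q : V} {Q : List X} (hQ : Q.head? = some (α q)) :
    conj α β [q] Q = Q := by
  simp only [conj, wcomp, List.map_cons, List.map_nil, List.reverse_cons, List.reverse_nil,
    List.nil_append, List.tail_cons, List.append_nil]
  rw [← List.cons_head?_tail hQ]
  rfl

theorem conj_snoc (α β : V → X) {Wl : List V} (hne : Wl ≠ []) (w : V) (Q : List X) :
    conj α β (Wl ++ [w]) Q = α w :: (conj α β Wl Q ++ [β w]) := by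
  simp only [conj, wcomp, List.map_append, List.map_cons, List.map_nil,
    List.reverse_append, List.reverse_cons, List.reverse_nil, List.nil_append,
    List.cons_append, List.tail_cons]
  have hmb : (Wl.map β) ≠ [] := by simpa using hne
  rw [List.tail_append_of_ne_nil hmb]
  simp

/-- Lemma B : transport along a walk -/
theorem transport_walk {G : Dgraph V} {σs : List (V → X)} (hne : σs ≠ [])
    (hch : σs.Chain' (StepOK G)) {α' β' : V → X} (hh : σs.head? = some α')
    (hl : σs.getLast? = some β') {a : V} :
    ∀ {Wl : List V} {b : V}, IsWalk G a b Wl →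
      PiEq (conj α' β' Wl (colorWalk σs a)) (colorWalk σs b) := by
  intro Wl
  induction Wl using List.reverseRecOn with
  | nil => intro b hW; exact absurd rfl hW.1
  | append_singleton l w ihl =>
    intro b hW
    have hbw : b = w := by
      have h0 := hW.2.2.1
      rw [List.getLast?_concat] at h0
      injection h0 with h0
      exact h0.symm
    subst hbw
    by_cases hlne : l = []
    · subst hlne
      have hq : b = a := by
        have h1 := hW.2.1
        simp only [List.nil_append, List.head?_cons, Option.some.injEq] at h1
        exact h1
      subst hq
      simp only [List.nil_append]
      rw [conj_singleton (colorWalk_head? hh b)]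
      exact piEq_refl _
    · have hlast : ∃ v, l.getLast? = some v := by
        cases h : l.getLast? with
        | none => rw [List.getLast?_eq_none_iff] at h; exact absurd h hlne
        | some v => exact ⟨v, rfl⟩
      obtain ⟨v, hv⟩ := hlast
      have hWl : IsWalk G a v l := by
        refine ⟨hlne, ?_, hv, ?_⟩
        · have h1 := hW.2.1
          rwa [List.head?_append_of_ne_nil _ hlne] at h1
        · have h1 := hW.2.2.2
          rw [List.Chain', List.isChain_append] at h1
          exact h1.1
      have hadj : G.UAdj v b := by
        have h1 := hW.2.2.2
        rw [List.Chain', List.isChain_append] at h1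
        exact h1.2.2 v (by rw [hv]; rfl) b rfl
      rw [conj_snoc _ _ hlne]
      have ih := ihl hWl
      refine piEq_trans (piEq_cons (α' b) (piEq_append_right [β' b] ih)) ?_
      exact transport_edge hne hch hh hl hadj

end Aux3
section Aux4
open HRecoloring List

variable {V X : Type}

theorem getLast?_tail_of_ne_nil {l : List X} (h : l.tail ≠ []) :
    l.tail.getLast? = l.getLast? := by
  cases l with
  | nil => rfl
  | cons a t =>
    simp only [List.tail_cons]
    cases t with
    | nil => exact absurd rfl h
    | cons b t' => rw [List.getLast?_cons_cons]

theorem chain'_and {Y : Type} {R S : Y → Y → Prop} :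
    ∀ {l : List Y}, l.Chain' R → l.Chain' S →
      l.Chain' (fun a b => R a b ∧ S a b)
  | [], _, _ => List.isChain_nil
  | [_], _, _ => List.isChain_singleton _
  | _ :: _ :: _, hR, hS =>
    List.isChain_cons_cons.2 ⟨⟨(List.isChain_cons_cons.1 hR).1, (List.isChain_cons_cons.1 hS).1⟩,
      chain'_and (List.isChain_cons_cons.1 hR).2 (List.isChain_cons_cons.1 hS).2⟩

theorem wcomp_eq_dropLast_append {R L : List X} {x : X}
    (hR : R.getLast? = some x) (hL : L.head? = some x) :
    wcomp R L = R.dropLast ++ L := by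
  rw [wcomp]
  conv_lhs => rw [← List.dropLast_append_getLast? _ hR]
  rw [List.append_assoc]
  congr 1
  simpa using List.cons_head?_tail hL

theorem conj_congr_q {α β : V → X} {Wl : List V} {q0 : V}
    (hWhead : Wl.head? = some q0)
    {L Q : List X} (hL : L.head? = some (α q0)) (h : PiEq L Q) :
    PiEq (conj α β Wl L) (conj α β Wl Q) := by
  have hQh : Q.head? = some (α q0) := (piEq_head?_eq h) ▸ hL
  have hRlast : (Wl.map α).reverse.getLast? = some (α q0) := by
    rw [List.getLast?_reverse, List.head?_map, hWhead]
    rfl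
  show PiEq (wcomp (wcomp (Wl.map α).reverse L) (Wl.map β))
    (wcomp (wcomp (Wl.map α).reverse Q) (Wl.map β))
  rw [wcomp_eq_dropLast_append hRlast hL, wcomp_eq_dropLast_append hRlast hQh]
  show PiEq (_ ++ (Wl.map β).tail) (_ ++ (Wl.map β).tail)
  exact piEq_append_right _ (piEq_append_left _ h)

/-- head of a conjugated walk -/
theorem conj_head? {α β : V → X} {Wl : List V} {v : V} (hne : Wl ≠ [])
    (hlast : Wl.getLast? = some v) (Q : List X) :
    (conj α β Wl Q).head? = some (α v) := by
  have h1 : (Wl.map α).reverse ≠ [] := by simpa using hne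
  show (wcomp (wcomp (Wl.map α).reverse Q) (Wl.map β)).head? = some (α v)
  rw [wcomp, wcomp, List.append_assoc, List.head?_append_of_ne_nil _ h1,
    List.head?_reverse, List.getLast?_map, hlast]
  rfl

theorem conj_getLast? {α β : V → X} {Wl : List V} {q0 v : V} (hne : Wl ≠ [])
    (hhead : Wl.head? = some q0) (hlast : Wl.getLast? = some v) {Q : List X}
    (hQne : Q ≠ []) (hQh : Q.head? = some (α q0)) (hQl : Q.getLast? = some (β q0)) :
    (conj α β Wl Q).getLast? = some (β v) := by
  show (wcomp (wcomp (Wl.map α).reverse Q) (Wl.map β)).getLast? = some (β v)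
  by_cases ht : (Wl.map β).tail = []
  · -- Wl is a singleton, so q0 = v
    have hWl : Wl = [q0] := by
      cases Wl with
      | nil => exact absurd rfl hne
      | cons z zs =>
        simp only [List.map_cons, List.tail_cons, List.map_eq_nil_iff] at ht
        subst ht
        simp only [List.head?_cons, Option.some.injEq] at hhead
        rw [hhead]
    have hq0v : q0 = v := by
      rw [hWl] at hlast
      simpa using hlast
    rw [hWl]
    simp only [wcomp, List.map_cons, List.map_nil, List.reverse_cons, List.reverse_nil,
      List.nil_append, List.tail_cons, List.append_nil]
    by_cases hQt : Q.tail = []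
    · have hQs : Q = [α q0] := by
        cases Q with
        | nil => exact absurd rfl hQne
        | cons c t =>
          simp only [List.tail_cons] at hQt
          subst hQt
          simp only [List.head?_cons, Option.some.injEq] at hQh
          rw [hQh]
      rw [hQs] at hQl
      simp only [List.getLast?_singleton, Option.some.injEq] at hQl
      rw [hQt, List.append_nil]
      simp only [List.getLast?_singleton, Option.some.injEq]
      rw [← hq0v, hQl]
    · rw [List.getLast?_append_of_ne_nil _ hQt, getLast?_tail_of_ne_nil hQt, hQl, hq0v]
  · rw [wcomp, List.getLast?_append_of_ne_nil _ ht, getLast?_tail_of_ne_nil ht,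
      List.getLast?_map, hlast]
    rfl

end Aux4
section Aux5a
open HRecoloring List

variable {V X : Type}

theorem getLast?_cons_of_ne_nil {l : List X} (a : X) (h : l ≠ []) :
    (a :: l).getLast? = l.getLast? := by
  cases l with
  | nil => exact absurd rfl h
  | cons b t => exact List.getLast?_cons_cons ..

/-- The structure of the reduced walk of a non-push-pullable neighbor. -/
theorem bad_neighbor {a c bv aw bw : X} {t M : List X}
    (hred : IsReduced (a :: c :: t))
    (hlastL : (a :: c :: t).getLast? = some bv)
    (hMred : IsReduced M)
    (hMlen : M.length ≤ (a :: c :: t).length)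
    (hpe : PiEq (aw :: ((a :: c :: t) ++ [bw])) M)
    (h1 : aw ≠ a) (h2 : aw ≠ c) :
    M = aw :: (a :: c :: t).dropLast := by
  set L := a :: c :: t with hL
  have hLne : L ≠ [] := by simp [hL]
  have hDne : L.dropLast ≠ [] := by simp [hL]
  have hA : IsReduced (aw :: L) := by
    refine isReduced_cons hred ?_ ?_
    · intro b hb
      simp only [hL, List.head?_cons, Option.some.injEq] at hb
      exact hb ▸ h1
    · intro b hb
      simp only [hL, List.tail_cons, List.head?_cons, Option.some.injEq] at hb
      exact hb ▸ h2
  have hD := List.dropLast_append_getLast? _ hlastL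
  by_cases e1 : bw = bv
  · -- a loop at the end cancels; contradiction with lengths
    exfalso
    subst e1
    have hstep : RStep (aw :: (L ++ [bw])) (aw :: L) := by
      have e : aw :: (L ++ [bw]) = (aw :: L.dropLast) ++ [bw, bw] ++ [] := by
        conv_lhs => rw [← hD]
        simp
      have e' : aw :: L = (aw :: L.dropLast) ++ [bw] ++ [] := by
        conv_lhs => rw [← hD]
        simp
      rw [e, e']
      exact rstep_loop _ _ _
    have hMeq : aw :: L = M :=
      piEq_reduced_unique (piEq_trans (piEq_symm (piEq_of_rstep hstep)) hpe) hA hMred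
    have := congrArg List.length hMeq
    simp only [List.length_cons] at this
    omega
  by_cases e2 : L.dropLast.getLast? = some bw
  · -- the backtracking case: M = aw :: L.dropLast
    have hD2 := List.dropLast_append_getLast? _ e2
    have hstep : RStep (aw :: (L ++ [bw])) (aw :: L.dropLast) := by
      have e : aw :: (L ++ [bw]) = (aw :: L.dropLast.dropLast) ++ [bw, bv, bw] ++ [] := by
        conv_lhs => rw [← hD, ← hD2]
        simp
      have e' : aw :: L.dropLast = (aw :: L.dropLast.dropLast) ++ [bw] ++ [] := by
        conv_lhs => rw [← hD2]
        simp
      rw [e, e']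
      exact rstep_bt _ _ _ _
    have hDred : IsReduced (aw :: L.dropLast) := by
      refine isReduced_cons (isReduced_dropLast hred) ?_ ?_
      · intro b hb
        simp only [hL, List.dropLast_cons₂, List.head?_cons, Option.some.injEq] at hb
        exact hb ▸ h1
      · intro b hb
        simp only [hL, List.dropLast_cons₂, List.tail_cons] at hb
        cases t with
        | nil => simp at hb
        | cons c' t' =>
          simp only [List.dropLast_cons₂, List.head?_cons, Option.some.injEq] at hb
          exact hb ▸ h2
    exact (piEq_reduced_unique (piEq_trans (piEq_symm (piEq_of_rstep hstep)) hpe)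
      hDred hMred).symm
  · -- no cancellation: contradiction with lengths
    exfalso
    have hO : IsReduced ((aw :: L) ++ [bw]) := by
      refine isReduced_snoc hA ?_ ?_
      · intro b hb
        rw [getLast?_cons_of_ne_nil _ hLne, hlastL] at hb
        injection hb with hb
        exact hb ▸ e1
      · intro b hb
        have hdl : (aw :: L).dropLast = aw :: L.dropLast := by
          rw [hL]; simp
        rw [hdl, getLast?_cons_of_ne_nil _ hDne] at hb
        intro hbw
        exact e2 (hbw ▸ hb)
    have hMeq : (aw :: L) ++ [bw] = M := by
      refine piEq_reduced_unique ?_ hO hMred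
      have : aw :: (L ++ [bw]) = (aw :: L) ++ [bw] := by simp
      rw [← this]
      exact hpe
    have := congrArg List.length hMeq
    simp only [List.length_append, List.length_cons] at this
    omega

/-- No infinite chains of "bad neighbors" when `α` is null-homotopic. -/
theorem no_inf_chain {G : Dgraph V} [Finite V] {α : V → X} (f : ℕ → V)
    (hadj : ∀ k, G.UAdj (f k) (f (k + 1)))
    (h1 : ∀ k, α (f (k + 1)) ≠ α (f k))
    (h2 : ∀ k, α (f (k + 2)) ≠ α (f k))
    (hnull : ∀ (v₀ : V) (C : List V), IsWalk G v₀ v₀ C → PiEq (C.map α) [α v₀]) :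
    False := by
  obtain ⟨i, j, hij, hf⟩ : ∃ i j, i < j ∧ f i = f j := by
    obtain ⟨i, j, hij, hf⟩ := Finite.exists_ne_map_eq_of_infinite f
    rcases Nat.lt_or_ge i j with h | h
    · exact ⟨i, j, h, hf⟩
    · exact ⟨j, i, by omega, hf.symm⟩
  have hj2 : i + 2 ≤ j := by
    by_contra hcon
    have : j = i + 1 := by omega
    subst this
    exact h1 i (by rw [hf])
  obtain ⟨n, hn2, rfl⟩ : ∃ n, 2 ≤ n ∧ j = i + n := ⟨j - i, by omega, by omega⟩
  -- the closed walk
  set C : List V := (List.range (n + 1)).map (fun s => f (i + s)) with hC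
  have hCwalk : IsWalk G (f i) (f i) C := by
    refine ⟨by simp [hC], ?_, ?_, ?_⟩
    · rw [hC, List.range_succ_eq_map]
      simp
    · rw [hC, List.range_succ, List.map_append]
      simp only [List.map_cons, List.map_nil]
      rw [List.getLast?_concat, ← hf]
    · rw [hC, List.Chain', List.isChain_map]
      rw [List.isChain_range_succ]
      intro m _
      exact hadj (i + m)
  -- the image walk is reduced
  have hred : ∀ (N s : ℕ), IsReduced ((List.range (N + 1)).map (fun u => α (f (s + u)))) := by
    intro N
    induction N with
    | zero => intro s; simpa using isReduced_singleton (α (f (s + 0)))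
    | succ N ih =>
      intro s
      rw [List.range_succ_eq_map, List.map_cons, List.map_map]
      have hfun : ((fun u => α (f (s + u))) ∘ Nat.succ) = fun u => α (f (s + 1 + u)) := by
        funext u
        simp only [Function.comp_apply]
        congr 2
        omega
      rw [hfun]
      refine isReduced_cons (ih (s + 1)) ?_ ?_
      · intro b hb
        rw [List.range_succ_eq_map] at hb
        simp only [List.map_cons, List.head?_cons, Option.some.injEq] at hb
        rw [Nat.add_zero] at hb
        subst hb
        exact fun hcon => h1 s (by simpa using hcon.symm)
      · intro b hb
        cases N with
        | zero => simp [List.range_succ_eq_map] at hb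
        | succ N' =>
          rw [List.range_succ_eq_map] at hb
          simp only [List.map_cons, List.map_map, List.tail_cons, List.head?_cons,
            Option.some.injEq] at hb
          rw [List.range_succ_eq_map] at hb
          simp only [List.map_cons, List.head?_cons, Option.some.injEq] at hb
          have : b = α (f (s + 2)) := hb.symm
          subst this
          exact fun hcon => h2 s (by simpa using hcon.symm)
  have hCred : IsReduced (C.map α) := by
    rw [hC, List.map_map]
    exact hred n i
  have hpi := hnull (f i) C hCwalk
  have := piEq_reduced_unique hpi hCred (isReduced_singleton _)
  have hlen := congrArg List.length this
  simp only [hC, List.length_map, List.length_range, List.length_cons,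
    List.length_nil] at hlen
  omega

end Aux5a
section Aux5b
open HRecoloring List

variable {V X : Type}

theorem dropLast_head? {l : List X} (h : 2 ≤ l.length) :
    l.dropLast.head? = l.head? := by
  cases l with
  | nil => simp at h
  | cons a t =>
    cases t with
    | nil => simp at h
    | cons b u => simp

/-- invariant of the construction -/
structure BuildInv (G : Dgraph V) (H : Dgraph X) (β : V → X) (α : V → X)
    (S : V → List X) : Prop where
  head : ∀ v, (S v).head? = some (α v)
  last : ∀ v, (S v).getLast? = some (β v)
  red : ∀ v, IsReduced (S v)
  sym : ∀ v, IsSymWalk H (S v)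
  hom : IsHom G H α
  null : ∀ (v₀ : V) (C : List V), IsWalk G v₀ v₀ C → PiEq (C.map α) [α v₀]
  consist : ∀ v w, G.UAdj v w → PiEq (α w :: (S v ++ [β w])) (S w)

theorem sv_decomp {α : V → X} {S : V → List X} (hhead : ∀ v, (S v).head? = some (α v))
    {v : V} (h : 2 ≤ (S v).length) : ∃ c t, S v = α v :: c :: t := by
  cases hSv : S v with
  | nil => rw [hSv] at h; simp at h
  | cons a l =>
    have ha : a = α v := by
      have := hhead v
      rw [hSv] at this
      simpa using this
    cases l with
    | nil => rw [hSv] at h; simp at h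
    | cons c t => exact ⟨c, t, by rw [ha]⟩

/-- Key structure: a non-push-pullable neighbor of a maximal vertex -/
theorem key_structure {G : Dgraph V} {H : Dgraph X} {β α : V → X} {S : V → List X}
    (inv : BuildInv G H β α S) {m : ℕ} (hmax : ∀ u, (S u).length ≤ m)
    {v w : V} (hlen2 : 2 ≤ (S v).length) (hlenv : (S v).length = m)
    (hadj : G.UAdj v w) (hne1 : α w ≠ α v) (hne2 : (S v).tail.head? ≠ some (α w)) :
    S w = α w :: (S v).dropLast := by
  obtain ⟨c, t, hSv⟩ := sv_decomp inv.head hlen2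
  rw [hSv]
  have hred := inv.red v
  rw [hSv] at hred
  have hlastL := inv.last v
  rw [hSv] at hlastL
  have hpe := inv.consist v w hadj
  rw [hSv] at hpe
  have h2 : α w ≠ c := by
    intro hcon
    apply hne2
    rw [hSv, hcon]
    rfl
  exact bad_neighbor hred hlastL (inv.red w) (by rw [← hSv, hlenv]; exact hmax w) hpe hne1 h2

/-- there is always a recolorable vertex -/
theorem exists_recolorable {G : Dgraph V} {H : Dgraph X} [Finite V] {β α : V → X}
    {S : V → List X} (inv : BuildInv G H β α S) {v₀ : V} (hv₀ : 2 ≤ (S v₀).length)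
    (hmax : ∀ u, (S u).length ≤ (S v₀).length) :
    ∃ v, 2 ≤ (S v).length ∧
      ∀ w, G.UAdj v w → α w = α v ∨ (S v).tail.head? = some (α w) := by
  by_contra hcon
  push_neg at hcon
  -- the set of chain states
  let P : V × V → Prop := fun p =>
    G.UAdj p.1 p.2 ∧ (S p.1).length = (S v₀).length ∧ 2 ≤ (S p.1).length ∧
      S p.2 = α p.2 :: (S p.1).dropLast ∧ α p.2 ≠ α p.1 ∧
      (S p.1).tail.head? ≠ some (α p.2)
  have hnext : ∀ p, P p → ∃ p', P p' ∧ p'.1 = p.2 := by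
    rintro ⟨u, w⟩ ⟨hadj, hlenu, hlen2u, hSw, hne1, hne2⟩
    dsimp only at hadj hlenu hlen2u hSw hne1 hne2
    have hlenw : (S w).length = (S v₀).length := by
      rw [hSw]
      simp only [List.length_cons, List.length_dropLast]
      omega
    have hlen2w : 2 ≤ (S w).length := by omega
    obtain ⟨w', hadj', hne1', hne2'⟩ := hcon w hlen2w
    have hSw' := key_structure inv hmax hlen2w hlenw hadj' hne1' hne2'
    exact ⟨(w, w'), ⟨hadj', hlenw, hlen2w, hSw', hne1', hne2'⟩, rfl⟩
  -- initial state
  obtain ⟨w₀, hadj0, hne10, hne20⟩ := hcon v₀ hv₀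
  have hS0 := key_structure inv hmax hv₀ rfl hadj0 hne10 hne20
  have hP0 : P (v₀, w₀) := ⟨hadj0, rfl, hv₀, hS0, hne10, hne20⟩
  -- iterate
  let T := {p : V × V // P p}
  have hstep : ∀ x : T, ∃ y : T, y.1.1 = x.1.2 := by
    rintro ⟨p, hp⟩
    obtain ⟨p', hp', he⟩ := hnext p hp
    exact ⟨⟨p', hp'⟩, he⟩
  choose step hstep_eq using hstep
  let F : ℕ → T := fun k => step^[k] ⟨(v₀, w₀), hP0⟩
  have hFsucc : ∀ k, F (k + 1) = step (F k) := by
    intro k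
    exact Function.iterate_succ_apply' step k _
  let f : ℕ → V := fun k => (F k).1.1
  have hf1 : ∀ k, f (k + 1) = (F k).1.2 := by
    intro k
    show (F (k + 1)).1.1 = (F k).1.2
    rw [hFsucc k]
    exact hstep_eq (F k)
  refine no_inf_chain (G := G) (α := α) f ?_ ?_ ?_ inv.null
  · intro k
    rw [hf1 k]
    exact (F k).2.1
  · intro k
    rw [hf1 k]
    exact (F k).2.2.2.2.2.1
  · intro k
    have e1 : f (k + 2) = (F (k + 1)).1.2 := hf1 (k + 1)
    have e2 : (F (k + 1)).1.1 = (F k).1.2 := by rw [hFsucc k]; exact hstep_eq (F k)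
    have hprop := (F (k + 1)).2.2.2.2.2.2
    -- (S (F (k+1)).1.1).tail.head? ≠ some (α (F (k+1)).1.2)
    have hstruct := (F k).2.2.2.2.1
    -- S (F k).1.2 = α (F k).1.2 :: (S (F k).1.1).dropLast
    have hlen2 : 2 ≤ (S ((F k).1.1)).length := (F k).2.2.2.1
    have hth : (S ((F (k + 1)).1.1)).tail.head? = some (α (f k)) := by
      rw [e2, hstruct]
      simp only [List.tail_cons]
      rw [dropLast_head? hlen2]
      exact inv.head _
    rw [e1] at *
    intro hcon2
    apply hprop
    rw [hth, hcon2]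
  
end Aux5b
section Aux5c
open HRecoloring List

variable {V X : Type}

theorem build {G : Dgraph V} {H : Dgraph X} [Fintype V] (hGrefl : G.IsReflexive)
    (hHrefl : H.IsReflexive) (β : V → X) (q : V) (N : ℕ) :
    ∀ (α : V → X) (S : V → List X), (∑ v, wlen (S v)) = N →
      BuildInv G H β α S →
      ∃ σs : List (V → X), Hom1Seq G H σs ∧ σs.head? = some α ∧
        σs.getLast? = some β ∧ PushOrPull G σs ∧ PiEq (colorWalk σs q) (S q) := by
  induction N using Nat.strong_induction_on with
  | _ N ih =>
  intro α S hsum inv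
  classical
  by_cases h0 : ∀ v, (S v).length ≤ 1
  · -- base case : all walks are trivial, α = β
    have hsingle : ∀ v, S v = [α v] := by
      intro v
      have hh := inv.head v
      cases hSv : S v with
      | nil => rw [hSv] at hh; simp at hh
      | cons a l =>
        rw [hSv] at hh
        simp only [List.head?_cons, Option.some.injEq] at hh
        subst hh
        cases l with
        | nil => rfl
        | cons b u =>
          have := h0 v
          rw [hSv] at this
          simp at this
    have hαβ : α = β := by
      funext v
      have hl := inv.last v
      rw [hsingle v] at hl
      simpa using hl
    refine ⟨[α], ⟨List.cons_ne_nil _ _, ?_, List.isChain_singleton _⟩, rfl, ?_, ?_, ?_⟩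
    · intro σ hσ
      simp only [List.mem_singleton] at hσ
      subst hσ
      exact inv.hom
    · simp [hαβ]
    · exact List.isChain_singleton _
    · rw [hsingle q]
      exact piEq_refl _
  · -- inductive step
    push_neg at h0
    obtain ⟨v₁, hv₁⟩ := h0
    obtain ⟨v₀, -, hmax₀⟩ := Finset.exists_max_image Finset.univ
      (fun v => (S v).length) ⟨v₁, Finset.mem_univ v₁⟩
    have hmax : ∀ u, (S u).length ≤ (S v₀).length := fun u => hmax₀ u (Finset.mem_univ u)
    have hv₀ : 2 ≤ (S v₀).length := le_trans (by omega) (hmax v₁)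
    obtain ⟨v, hvlen, hrec⟩ := exists_recolorable inv hv₀ hmax
    obtain ⟨c, t, hSv⟩ := sv_decomp inv.head hvlen
    have hrec' : ∀ w, G.UAdj v w → α w = α v ∨ α w = c := by
      intro w hw
      rcases hrec w hw with h | h
      · exact Or.inl h
      · right
        rw [hSv] at h
        simp only [List.tail_cons, List.head?_cons, Option.some.injEq] at h
        exact h.symm
    have hvc : α v ≠ c := isReduced_pair_ne (inv.red v) hSv
    have hsym1 : H.Adj (α v) c ∧ H.Adj c (α v) := by
      have := inv.sym v
      rw [hSv] at this
      exact (List.isChain_cons_cons.1 this).1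
    set α' : V → X := Function.update α v c with hα'def
    set S' : V → List X := Function.update S v (c :: t) with hS'def
    have hα'v : α' v = c := Function.update_self v c α
    have hα'ne : ∀ w, w ≠ v → α' w = α w := fun w hw => Function.update_of_ne hw c α
    have hS'v : S' v = c :: t := Function.update_self v (c :: t) S
    have hS'ne : ∀ w, w ≠ v → S' w = S w := fun w hw => Function.update_of_ne hw (c :: t) S
    -- the Hom1 adjacency of the step
    have huniq : ∃! u, α u ≠ α' u := by
      refine ⟨v, by show α v ≠ α' v; rw [hα'v]; exact hvc, ?_⟩
      intro y hy
      by_contra hyv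
      exact hy (by rw [hα'ne y hyv])
    have hpp_pair : ∀ u, α u ≠ α' u → ∀ w, G.UAdj u w → α w = α u ∨ α w = α' u := by
      intro u hu w hw
      have huv : u = v := by
        by_contra h
        exact hu (by rw [hα'ne u h])
      subst huv
      rw [hα'v]
      exact hrec' w hw
    have hstepok : StepOK G α α' := ⟨huniq, hpp_pair⟩
    have harcs : ∀ ⦃x y⦄, G.Adj x y → H.Adj (α x) (α' y) ∧ H.Adj (α' x) (α y) := by
      intro x y hxy
      by_cases hx : x = v <;> by_cases hy : y = v
      · rw [hx, hy] at hxy ⊢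
        rw [hα'v]
        exact hsym1
      · rw [hx] at hxy ⊢
        rw [hα'ne y hy, hα'v]
        refine ⟨inv.hom hxy, ?_⟩
        rcases hrec' y (Or.inl hxy) with h | h
        · rw [h]; exact hsym1.2
        · rw [h]; exact hHrefl c
      · rw [hy] at hxy ⊢
        rw [hα'ne x hx, hα'v]
        refine ⟨?_, inv.hom hxy⟩
        rcases hrec' x (Or.inr hxy) with h | h
        · rw [h]; exact hsym1.1
        · rw [h]; exact hHrefl c
      · rw [hα'ne x hx, hα'ne y hy]
        exact ⟨inv.hom hxy, inv.hom hxy⟩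
    have hhom1 : Hom1Adj G H α α' := ⟨huniq, harcs⟩
    have hhom' : IsHom G H α' := by
      intro x y hxy
      by_cases hx : x = v <;> by_cases hy : y = v
      · rw [hx, hy] at hxy ⊢; rw [hα'v]; exact hHrefl c
      · rw [hx] at hxy ⊢
        rw [hα'ne y hy, hα'v]
        rcases hrec' y (Or.inl hxy) with h | h
        · rw [h]; exact hsym1.2
        · rw [h]; exact hHrefl c
      · rw [hy] at hxy ⊢
        rw [hα'ne x hx, hα'v]
        rcases hrec' x (Or.inr hxy) with h | h
        · rw [h]; exact hsym1.1
        · rw [h]; exact hHrefl c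
      · rw [hα'ne x hx, hα'ne y hy]
        exact inv.hom hxy
    -- Null α'
    have hnull' : ∀ (u : V) (C : List V), IsWalk G u u C → PiEq (C.map α') [α' u] := by
      intro u C hC
      have hchain2 : ([α, α'] : List (V → X)).Chain' (StepOK G) := by
        rw [List.Chain', List.isChain_cons_cons]
        exact ⟨hstepok, List.isChain_singleton _⟩
      have htw := transport_walk (σs := [α, α']) (List.cons_ne_nil _ _) hchain2
        (α' := α) (β' := α') rfl rfl (a := u) hC
      have hcw : colorWalk [α, α'] u = [α u, α' u] := rfl
      rw [hcw] at htw
      have hCh : (C.map α').head? = some (α' u) := by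
        rw [List.head?_map, hC.2.1]
        rfl
      have hconj : conj α α' C [α u, α' u] =
          ((C.map α).reverse ++ [α' u]) ++ (C.map α').tail := rfl
      have h1 : PiEq (conj α α' C [α u, α' u]) (α u :: C.map α') := by
        rw [hconj]
        have hrev : PiEq (C.map α).reverse [α u] := by
          have := piEq_reverse (inv.null u C hC)
          simpa using this
        refine piEq_trans
          (piEq_append_right _ (piEq_append_right _ hrev)) ?_
        have he : (([α u] : List X) ++ [α' u]) ++ (C.map α').tail = α u :: C.map α' := by
          simp only [List.cons_append, List.nil_append, List.cons.injEq, true_and]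
          exact List.cons_head?_tail hCh
        rw [he]
        exact piEq_refl _
      have h2 : PiEq (α u :: C.map α') [α u, α' u] := piEq_trans (piEq_symm h1) htw
      obtain ⟨r, hr1, hr2, -⟩ := exists_reduced (C.map α')
      have hrh : r.head? = some (α' u) := by rw [← piEq_head?_eq hr1]; exact hCh
      have h3 : PiEq (α u :: r) [α u, α' u] :=
        piEq_trans (piEq_cons _ (piEq_symm hr1)) h2
      have hio := piEq_iota h3
      rw [iota_cons_head (α u) hrh] at hio
      have hio2 : iota [α u, α' u] = wgen (α u) (α' u) := by
        rw [iota_cons₂]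
        simp
      rw [hio2] at hio
      have hione : iota r = 1 := by
        have h4 : wgen (α u) (α' u) * iota r = wgen (α u) (α' u) * 1 := by
          rw [mul_one]
          exact hio
        exact mul_left_cancel h4
      have hlen1 := reduced_iota_one hr2 hione
      have hr_eq : r = [α' u] := by
        cases r with
        | nil => simp at hrh
        | cons x rt =>
          simp only [List.head?_cons, Option.some.injEq] at hrh
          subst hrh
          cases rt with
          | nil => rfl
          | cons y ru => simp at hlen1
      rw [hr_eq] at hr1
      exact hr1
    -- the new invariant
    have hlast_ct : (c :: t).getLast? = some (β v) := by
      have := inv.last v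
      rw [hSv, List.getLast?_cons_cons] at this
      exact this
    have inv' : BuildInv G H β α' S' := by
      constructor
      · intro w
        by_cases hw : w = v
        · rw [hw, hS'v, hα'v]; rfl
        · rw [hS'ne w hw, hα'ne w hw]; exact inv.head w
      · intro w
        by_cases hw : w = v
        · rw [hw, hS'v]; exact hlast_ct
        · rw [hS'ne w hw]; exact inv.last w
      · intro w
        by_cases hw : w = v
        · rw [hw, hS'v]
          refine isReduced_tail (l := c :: t) (a := α v) ?_
          rw [← hSv]
          exact inv.red v
        · rw [hS'ne w hw]; exact inv.red w
      · intro w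
        by_cases hw : w = v
        · rw [hw, hS'v]
          have hsv := inv.sym v
          rw [hSv] at hsv
          exact (List.isChain_cons_cons.1 hsv).2
        · rw [hS'ne w hw]; exact inv.sym w
      · exact hhom'
      · exact hnull'
      · -- consistency
        intro x y hxy
        by_cases hx : x = v <;> by_cases hy : y = v
        · rw [hx, hy] at hxy ⊢
          rw [hS'v, hα'v]
          exact piEq_trans (piEq_loop_head' c (t ++ [β v])) (piEq_snoc_last hlast_ct)
        · rw [hx] at hxy ⊢
          rw [hS'v, hS'ne y hy, hα'ne y hy]
          have hold := inv.consist v y hxy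
          rw [hSv] at hold
          rcases hrec' y hxy with h | h
          · rw [h]
            rw [h] at hold
            exact piEq_trans
              (piEq_symm (piEq_loop_head' (α v) ((c :: t) ++ [β y]))) hold
          · rw [h]
            rw [h] at hold
            exact piEq_trans (piEq_loop_head' c (t ++ [β y]))
              (piEq_trans (piEq_symm (piEq_bt_head c (α v) (t ++ [β y]))) hold)
        · rw [hy] at hxy ⊢
          rw [hS'v, hS'ne x hx, hα'v]
          have hold := inv.consist x v hxy
          obtain ⟨sx, hSx⟩ : ∃ sx, S x = α x :: sx := by
            have hh := inv.head x
            cases hSx : S x with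
            | nil => rw [hSx] at hh; simp at hh
            | cons a l =>
              rw [hSx] at hh
              simp only [List.head?_cons, Option.some.injEq] at hh
              exact ⟨l, by rw [hh]⟩
          have hfin : PiEq (c :: S v) (c :: t) := by
            rw [hSv]
            exact piEq_bt_head c (α v) t
          rcases hrec' x (uadj_symm hxy) with h | h
          · -- α x = α v
            have hh2 : (S x ++ [β v]).head? = some (α v) := by
              rw [hSx, h]
              rfl
            have hstep1 : PiEq (S x ++ [β v]) (S v) :=
              piEq_trans (piEq_symm (piEq_loop_head hh2)) hold
            exact piEq_trans (piEq_cons c hstep1) hfin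
          · -- α x = c
            have ha : PiEq (c :: (S x ++ [β v])) (c :: (sx ++ [β v])) := by
              rw [hSx, h]
              exact piEq_loop_head' c (sx ++ [β v])
            have hb : PiEq (c :: α v :: (S x ++ [β v])) (c :: (sx ++ [β v])) := by
              rw [hSx, h]
              exact piEq_bt_head c (α v) (sx ++ [β v])
            have hc2 : PiEq (c :: α v :: (S x ++ [β v])) (c :: S v) :=
              piEq_cons c hold
            exact piEq_trans ha
              (piEq_trans (piEq_symm hb) (piEq_trans hc2 hfin))
        · rw [hS'ne x hx, hS'ne y hy, hα'ne y hy]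
          exact inv.consist x y hxy
    -- recursion
    have hsum' : (∑ u, wlen (S' u)) < N := by
      rw [← hsum]
      apply Finset.sum_lt_sum
      · intro u _
        by_cases hu : u = v
        · subst hu
          rw [hS'v, hSv]
          simp [wlen]
        · rw [hS'ne u hu]
      · refine ⟨v, Finset.mem_univ v, ?_⟩
        rw [hS'v, hSv]
        simp [wlen]
    obtain ⟨σs', hseq', hh', hl', hpp', hpe'⟩ := ih _ hsum' α' S' rfl inv'
    have hσs'ne : σs' ≠ [] := hseq'.1
    refine ⟨α :: σs', ⟨List.cons_ne_nil _ _, ?_, ?_⟩, rfl, ?_, ?_, ?_⟩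
    · intro σ hσ
      rcases List.mem_cons.1 hσ with h | h
      · subst h; exact inv.hom
      · exact hseq'.2.1 σ h
    · rw [List.Chain', List.isChain_cons]
      refine ⟨?_, hseq'.2.2⟩
      intro ψ hψ
      rw [hh'] at hψ
      injection hψ with hψ
      rw [← hψ]
      exact hhom1
    · rw [getLast?_cons_of_ne_nil α hσs'ne]
      exact hl'
    · rw [PushOrPull, List.Chain', List.isChain_cons]
      refine ⟨?_, hpp'⟩
      intro ψ hψ
      rw [hh'] at hψ
      injection hψ with hψ
      rw [← hψ]
      exact hpp_pair
    · show PiEq (α q :: colorWalk σs' q) (S q)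
      by_cases hq : q = v
      · subst hq
        rw [hS'v] at hpe'
        refine piEq_trans (piEq_cons (α q) hpe') ?_
        rw [hSv]
        exact piEq_refl _
      · rw [hS'ne q hq] at hpe'
        exact piEq_trans (piEq_cons (α q) hpe') (piEq_loop_head (inv.head q))

end Aux5c

section Aux6
open HRecoloring List

variable {V X : Type}

theorem walk_singleton (G : Dgraph V) (q : V) : IsWalk G q q [q] :=
  ⟨List.cons_ne_nil _ _, rfl, rfl, List.isChain_singleton _⟩

theorem walk_snoc {G : Dgraph V} {q v w : V} {Wl : List V}
    (hW : IsWalk G q v Wl) (hvw : G.UAdj v w) : IsWalk G q w (Wl ++ [w]) := by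
  obtain ⟨hne, hh, hl, hc⟩ := hW
  refine ⟨by simp, ?_, List.getLast?_concat, ?_⟩
  · rwa [List.head?_append_of_ne_nil _ hne]
  · rw [List.Chain', List.isChain_append]
    refine ⟨hc, List.isChain_singleton _, ?_⟩
    intro x hx y hy
    simp only [List.head?_cons, Option.mem_def, Option.some.injEq] at hy
    subst hy
    rw [hl] at hx
    simp only [Option.mem_def, Option.some.injEq] at hx
    subst hx
    exact hvw

end Aux6

open HRecoloring
/-- For reflexive digraphs with `α(C) = β(C) = ε` for all closed walks `C`, a
reduced walk `Q` from `α q` to `β q` is `H`-realizable (via a push-or-pull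
Hom₁ recoloring sequence) iff for every directed closed walk
`u₁ → … → u_n → u₁` in `G` (`n ≥ 2`), all the generated vertex walks `S_{u_k}`
are symmetric. -/
theorem statement17 {V X : Type} [Fintype V] [Fintype X]
    (G : Dgraph V) (H : Dgraph X)
    (hGrefl : G.IsReflexive) (hHrefl : H.IsReflexive)
    (hGconn : G.WConn) (hHconn : H.WConn)
    (α β : V → X) (hα : IsHom G H α) (hβ : IsHom G H β)
    (hnull : ∀ (v₀ : V) (C : List V), IsWalk G v₀ v₀ C →
      PiEq (C.map α) [α v₀] ∧ PiEq (C.map β) [β v₀])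
    (q : V) (Q : List X)
    (hQ : IsWalk H (α q) (β q) Q) (hQred : IsReduced Q)
    (S : V → List X) (hSred : ∀ v, IsReduced (S v))
    (hSpi : ∀ (v : V) (Wl : List V), IsWalk G q v Wl →
      PiEq (conj α β Wl Q) (S v)) :
    DRealizable G H α β q Q ↔
      (∀ C : List V, 3 ≤ C.length → C.Chain' G.Adj →
        C.head? = C.getLast? → ∀ v ∈ C, IsSymWalk H (S v)) := by
  constructor
  · -- forward : realizability implies symmetric vertex walks
    rintro ⟨σs, ⟨hne, hhom, hch1⟩, hh, hl, hpp, hpe⟩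
    intro C _ _ _ v _
    have hch : σs.Chain' (StepOK G) :=
      List.IsChain.imp (fun a b h => ⟨h.1.1, h.2⟩) (chain'_and hch1 hpp)
    obtain ⟨Wl, hWl⟩ := hGconn q v
    have hB := transport_walk hne hch hh hl hWl
    have hLh : (colorWalk σs q).head? = some (α q) := colorWalk_head? hh q
    have hcong := conj_congr_q (β := β) hWl.2.1 hLh hpe
    have h1 : PiEq (conj α β Wl Q) (colorWalk σs v) := piEq_trans (piEq_symm hcong) hB
    have h2 : PiEq (S v) (colorWalk σs v) := piEq_trans (piEq_symm (hSpi v Wl hWl)) h1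
    have hsym_cw : IsSymWalk H (colorWalk σs v) := by
      show List.Chain' _ (σs.map fun σ => σ v)
      rw [List.Chain', List.isChain_map]
      refine List.IsChain.imp ?_ hch1
      intro a b hab
      exact hab.2 (hGrefl v)
    obtain ⟨r, hr1, hr2, hr3⟩ := exists_reduced (colorWalk σs v)
    have hSr : S v = r := piEq_reduced_unique (piEq_trans h2 hr1) (hSred v) hr2
    rw [IsSymWalk, hSr]
    exact hr3 _ hsym_cw
  · -- backward : symmetric vertex walks imply realizability
    intro hsymm
    have hsymS : ∀ v, IsSymWalk H (S v) := by
      intro v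
      refine hsymm [v, v, v] (by simp) ?_ (by simp) v (by simp)
      exact List.isChain_cons_cons.2 ⟨hGrefl v,
        List.isChain_cons_cons.2 ⟨hGrefl v, List.isChain_singleton v⟩⟩
    have hinv : BuildInv G H β α S := by
      constructor
      · intro v
        obtain ⟨Wl, hWl⟩ := hGconn q v
        have := piEq_head?_eq (hSpi v Wl hWl)
        rw [← this]
        exact conj_head? hWl.1 hWl.2.2.1 Q
      · intro v
        obtain ⟨Wl, hWl⟩ := hGconn q v
        have := piEq_getLast?_eq (hSpi v Wl hWl)
        rw [← this]
        exact conj_getLast? hWl.1 hWl.2.1 hWl.2.2.1 hQ.1 hQ.2.1 hQ.2.2.1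
      · exact hSred
      · exact hsymS
      · exact hα
      · exact fun v₀ C hC => (hnull v₀ C hC).1
      · intro v w hvw
        obtain ⟨Wl, hWl⟩ := hGconn q v
        have h1 := hSpi v Wl hWl
        have h2 := hSpi w (Wl ++ [w]) (walk_snoc hWl hvw)
        rw [conj_snoc α β hWl.1 w Q] at h2
        refine piEq_trans ?_ h2
        exact piEq_cons (α w) (piEq_append_right [β w] (piEq_symm h1))
    obtain ⟨σs, hseq, hh, hl, hpp, hpe⟩ :=
      build hGrefl hHrefl β q (∑ v, wlen (S v)) α S rfl hinv
    have hQS : PiEq Q (S q) := by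
      have := hSpi q [q] (walk_singleton G q)
      rwa [conj_singleton hQ.2.1] at this
    exact ⟨σs, hseq, hh, hl, hpp, piEq_trans hpe (piEq_symm hQS)⟩
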